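/- Let P : ℕ → ℝ be a probability distribution supported on {1,...,n}, and define the reuse-term footprint rtfp(x) = m - ∑_{i=x+1}^{n} (i - x)·P(i), where m = ∑_{i=1}^{n} i·P(i). Then rtfp(0) = 0 (the Zero Footprint lemma), rtfp(x) is nondecreasing in x, and rtfp(x) = m for all x ≥ n. -/
import Mathlib


/-- The reuse-term footprint: `rtfp(0) = 0` (Zero Footprint lemma),
`rtfp` is nondecreasing, and `rtfp(x) = m` for all `x ≥ n`. -/
theorem reuse_term_footprint_properties
    (n : ℕ) (P : ℕ → ℝ)
    (hP : ∀ x, 0 ≤ P x)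
    (hsupp : ∀ x, P x ≠ 0 → x ∈ Finset.Icc 1 n)
    (hsum : ∑ x ∈ Finset.Icc 1 n, P x = 1)
    (m : ℝ) (hm : m = ∑ i ∈ Finset.Icc 1 n, (i : ℝ) * P i)
    (rtfp : ℕ → ℝ)
    (hrtfp : ∀ x, rtfp x = m - ∑ i ∈ Finset.Icc (x + 1) n, ((i : ℝ) - (x : ℝ)) * P i) :
    rtfp 0 = 0 ∧ Monotone rtfp ∧ ∀ x, n ≤ x → rtfp x = m := by
  refine ⟨?_, ?_, ?_⟩
  · rw [hrtfp, hm]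
    simp
  · apply monotone_nat_of_le_succ
    intro x
    rw [hrtfp, hrtfp]
    have h1 : ∑ i ∈ Finset.Icc (x + 1 + 1) n, ((i : ℝ) - (↑(x + 1) : ℝ)) * P i
        ≤ ∑ i ∈ Finset.Icc (x + 1) n, ((i : ℝ) - (x : ℝ)) * P i := by
      calc ∑ i ∈ Finset.Icc (x + 1 + 1) n, ((i : ℝ) - (↑(x + 1) : ℝ)) * P i
          ≤ ∑ i ∈ Finset.Icc (x + 1 + 1) n, ((i : ℝ) - (x : ℝ)) * P i := by
            apply Finset.sum_le_sum
            intro i hi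
            have := hP i
            push_cast
            nlinarith
        _ ≤ ∑ i ∈ Finset.Icc (x + 1) n, ((i : ℝ) - (x : ℝ)) * P i := by
            apply Finset.sum_le_sum_of_subset_of_nonneg
            · apply Finset.Icc_subset_Icc_left; omega
            · intro i hi _
              have h2 : (x : ℝ) + 1 ≤ (i : ℝ) := by
                exact_mod_cast (Finset.mem_Icc.mp hi).1
              have := hP i
              nlinarith
    linarith
  · intro x hx
    rw [hrtfp]
    have : Finset.Icc (x + 1) n = ∅ := by
      apply Finset.Icc_eq_empty; omega
    rw [this]
    simp
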